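/- Let M be a Kähler manifold of real dimension 2m ≥ 6. The Bochner curvature tensor of M vanishes if and only if for every point p ∈ M and all unit tangent vectors x, y, z ∈ T_p M spanning an antiholomorphic 3-plane (i.e. x, Jx, y, Jy, z, Jz are pairwise orthogonal), one has R(x, Jx, y, z) = 2 R(x, y, Jx, z). -/

import Mathlib

open scoped RealInnerProductSpace
open Module Submodule


/-- A compatible (orthogonal) complex structure on a real inner product space. -/
def IsComplexStructure {V : Type*} [NormedAddCommGroup V] [InnerProductSpace ℝ V]
    (J : V →ₗ[ℝ] V) : Prop :=
  (∀ x, J (J x) = -x) ∧ ∀ x y : V, ⟪J x, J y⟫ = ⟪x, y⟫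

/-- A (0,4) curvature-type tensor. -/
abbrev CurvTensor (V : Type*) [NormedAddCommGroup V] [InnerProductSpace ℝ V] :=
  V →ₗ[ℝ] V →ₗ[ℝ] V →ₗ[ℝ] V →ₗ[ℝ] ℝ


section Tools
variable {V : Type*} [NormedAddCommGroup V] [InnerProductSpace ℝ V]
variable {J : V →ₗ[ℝ] V} (hJ : IsComplexStructure J)

namespace CS

include hJ

lemma JJ (x : V) : J (J x) = -x := hJ.1 x

lemma innJJ (x y : V) : ⟪J x, J y⟫ = ⟪x, y⟫ := hJ.2 x y

lemma innJL (x y : V) : ⟪J x, y⟫ = -⟪x, J y⟫ := by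
  have h : ⟪J x, J (J y)⟫ = ⟪x, J y⟫ := hJ.2 x (J y)
  rw [hJ.1 y] at h
  simp only [inner_neg_right] at h
  linarith

lemma innJR (x y : V) : ⟪x, J y⟫ = -⟪y, J x⟫ := by
  have h := innJL hJ y x
  have h2 := real_inner_comm x (J y)
  linarith

lemma innJself (x : V) : ⟪x, J x⟫ = 0 := by
  have := innJR hJ x x; linarith

lemma normJ (x : V) : ‖J x‖ = ‖x‖ := by
  have h : ⟪J x, J x⟫ = ⟪x, x⟫ := hJ.2 x x
  rw [real_inner_self_eq_norm_sq, real_inner_self_eq_norm_sq] at h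
  nlinarith [norm_nonneg x, norm_nonneg (J x)]

/-- `J` as a linear isometry equivalence. -/
noncomputable def Jiso : V ≃ₗᵢ[ℝ] V :=
  LinearEquiv.isometryOfInner
    { toFun := J
      map_add' := J.map_add
      map_smul' := J.map_smul
      invFun := fun v => -J v
      left_inv := fun v => by simp [hJ.1 v]
      right_inv := fun v => by simp [map_neg, hJ.1 v] }
    (fun x y => hJ.2 x y)

@[simp] lemma Jiso_apply (x : V) : Jiso hJ x = J x := rfl

end CS

variable [FiniteDimensional ℝ V]

/-- Expansion of a linear functional against an orthonormal basis. -/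
lemma onb_expand {ι : Type*} [Fintype ι] (b : OrthonormalBasis ι ℝ V)
    (f : V →ₗ[ℝ] ℝ) (a : V) : ∑ i, ⟪b i, a⟫ * f (b i) = f a := by
  conv_rhs => rw [← b.sum_repr' a]
  rw [map_sum]
  refine Finset.sum_congr rfl fun i _ => ?_
  rw [map_smul, smul_eq_mul]

/-- Trace of a bilinear form is independent of the orthonormal basis. -/
lemma onb_trace_indep {ι κ : Type*} [Fintype ι] [Fintype κ]
    (b : OrthonormalBasis ι ℝ V) (c : OrthonormalBasis κ ℝ V)
    (F : V →ₗ[ℝ] V →ₗ[ℝ] ℝ) :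
    ∑ i, F (b i) (b i) = ∑ j, F (c j) (c j) := by
  have key : ∀ i, F (b i) (b i) = ∑ j, ⟪c j, b i⟫ * F (c j) (b i) := by
    intro i
    have h1 : F (b i) = ∑ j, ⟪c j, b i⟫ • F (c j) := by
      conv_lhs => rw [← c.sum_repr' (b i)]
      rw [map_sum]
      exact Finset.sum_congr rfl fun j _ => by rw [map_smul]
    rw [h1, LinearMap.sum_apply]
    exact Finset.sum_congr rfl fun j _ => by rw [LinearMap.smul_apply, smul_eq_mul]
  calc ∑ i, F (b i) (b i) = ∑ i, ∑ j, ⟪c j, b i⟫ * F (c j) (b i) :=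
        Finset.sum_congr rfl fun i _ => key i
    _ = ∑ j, ∑ i, ⟪c j, b i⟫ * F (c j) (b i) := Finset.sum_comm
    _ = ∑ j, F (c j) (c j) := by
        refine Finset.sum_congr rfl fun j _ => ?_
        calc ∑ i, ⟪c j, b i⟫ * F (c j) (b i)
            = ∑ i, ⟪b i, c j⟫ * F (c j) (b i) :=
              Finset.sum_congr rfl fun i _ => by rw [real_inner_comm]
          _ = F (c j) (c j) := onb_expand b (F (c j)) (c j)

include hJ in
/-- Reindexing a "mixed" trace by `J`. -/
lemma onb_trace_J {ι : Type*} [Fintype ι]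
    (b : OrthonormalBasis ι ℝ V) (F : V →ₗ[ℝ] V →ₗ[ℝ] ℝ) :
    ∑ i, F (b i) (J (b i)) = - ∑ i, F (J (b i)) (b i) := by
  have hmap : ∀ i, (b.map (CS.Jiso hJ)) i = J (b i) := fun i => b.map_apply _ i
  let G : V →ₗ[ℝ] V →ₗ[ℝ] ℝ := LinearMap.mk₂ ℝ (fun v w => F v (J w))
    (fun a a' w => by simp)
    (fun c a w => by simp)
    (fun a w w' => by simp)
    (fun c a w => by simp)
  have h := onb_trace_indep b (b.map (CS.Jiso hJ)) G
  simp only [hmap] at h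
  calc ∑ i, F (b i) (J (b i)) = ∑ i, G (b i) (b i) := rfl
    _ = ∑ i, G (J (b i)) (J (b i)) := h
    _ = ∑ i, F (J (b i)) (J (J (b i))) := rfl
    _ = - ∑ i, F (J (b i)) (b i) := by
        rw [← Finset.sum_neg_distrib]
        refine Finset.sum_congr rfl fun i _ => ?_
        rw [hJ.1, map_neg]

end Tools

/-- An algebraic curvature tensor of Kähler type. -/
structure IsKahlerCurv {V : Type*} [NormedAddCommGroup V] [InnerProductSpace ℝ V]
    (J : V →ₗ[ℝ] V) (R : CurvTensor V) : Prop where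
  skew₁ : ∀ x y z u, R x y z u = - R y x z u
  skew₂ : ∀ x y z u, R x y z u = - R x y u z
  symm : ∀ x y z u, R x y z u = R z u x y
  bianchi : ∀ x y z u, R x y z u + R y z x u + R z x y u = 0
  kahler : ∀ x y z u, R x y z u = R x y (J z) (J u)


section KTLemmas
variable {V : Type*} [NormedAddCommGroup V] [InnerProductSpace ℝ V]
variable {J : V →ₗ[ℝ] V} (hJ : IsComplexStructure J)
variable {T : CurvTensor V} (hT : IsKahlerCurv J T)

namespace KT

include hT

lemma zero₁₂ (x z u : V) : T x x z u = 0 := by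
  have := hT.skew₁ x x z u; linarith

lemma zero₃₄ (x z u : V) : T x z u u = 0 := by
  have := hT.skew₂ x z u u; linarith

include hJ

lemma J₁₂ (x y z u : V) : T (J x) (J y) z u = T x y z u := by
  have h1 := hT.symm (J x) (J y) z u
  have h2 := hT.kahler z u x y
  have h3 := hT.symm x y z u
  linarith

lemma L5 (x y : V) : T y (J x) y (J x) = T x (J y) x (J y) := by
  have a1 := J₁₂ hJ hT y (J x) y (J x)
  rw [hJ.1 x] at a1
  simp only [map_neg, LinearMap.neg_apply] at a1
  have a2 := hT.kahler (J y) x y (J x)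
  rw [hJ.1 x] at a2
  simp only [map_neg, LinearMap.neg_apply] at a2
  have a3 := hT.skew₁ (J y) x (J y) x
  have a4 := hT.skew₂ x (J y) (J y) x
  linarith

lemma K1 (x y : V) : T x (J x) y (J y) = T x y x y + T x (J y) x (J y) := by
  have hb := hT.bianchi x y (J y) (J x)
  have b1 := hT.kahler x y y x
  have b2 := hT.skew₂ x y y x
  have b3 := hT.symm y (J y) x (J x)
  have c1 := J₁₂ hJ hT y (J x) y (J x)
  rw [hJ.1 x] at c1
  simp only [map_neg, LinearMap.neg_apply] at c1
  have c2 := L5 hJ hT x y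
  linarith

lemma P1 (x y : V) : T x (J y) y (J x) = T x (J x) y (J y) - T x y x y := by
  have hb := hT.bianchi x (J y) y (J x)
  have d1 := hT.skew₁ (J y) y x (J x)
  have d2 := hT.symm y (J y) x (J x)
  have d3 := hT.kahler y x y x
  have d4 := hT.skew₁ y x y x
  have d5 := hT.skew₂ x y y x
  linarith

lemma hId (x y z : V) :
    T x (J x) y z - 2 * T x y (J x) z = T x y x (J z) + T x (J y) x z := by
  have hb := hT.bianchi x (J x) y z
  have h1 := J₁₂ hJ hT x (J y) x z
  rw [hJ.1 y] at h1
  simp only [map_neg, LinearMap.neg_apply] at h1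
  have d2 := hT.skew₁ y x (J x) z
  have d3 := hT.kahler x y (J x) z
  rw [hJ.1 x] at d3
  simp only [map_neg, LinearMap.neg_apply] at d3
  linarith

end KT
end KTLemmas


section Basis
variable {V : Type*} [NormedAddCommGroup V] [InnerProductSpace ℝ V] [FiniteDimensional ℝ V]
variable {J : V →ₗ[ℝ] V} (hJ : IsComplexStructure J)

/-- A unit vector orthogonal to finitely many given vectors exists in high dimension. -/
lemma exists_unit_orthogonal {ι : Type*} [Fintype ι] (v : ι → V)
    (h : Fintype.card ι < Module.finrank ℝ V) :
    ∃ w : V, ‖w‖ = 1 ∧ ∀ i, ⟪v i, w⟫ = 0 := by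
  classical
  set K : Submodule ℝ V := Submodule.span ℝ (Set.range v) with hK
  have hrk : Module.finrank ℝ K < Module.finrank ℝ V :=
    lt_of_le_of_lt (finrank_range_le_card v) h
  have hne : Kᗮ ≠ ⊥ := by
    intro hbot
    have := Submodule.finrank_add_finrank_orthogonal K
    rw [hbot] at this
    simp [finrank_bot] at this
    omega
  obtain ⟨w', hw'K, hw'⟩ := Submodule.exists_mem_ne_zero_of_ne_bot hne
  refine ⟨‖w'‖⁻¹ • w', norm_smul_inv_norm hw', fun i => ?_⟩
  have hmem : ‖w'‖⁻¹ • w' ∈ Kᗮ := Submodule.smul_mem _ _ hw'K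
  exact (Submodule.mem_orthogonal K _).mp hmem _ (Submodule.subset_span (Set.mem_range_self i))

/-- Extend an adapted orthonormal family by one vector. -/
lemma exists_adapted_ext {m k : ℕ} (hdim : Module.finrank ℝ V = 2 * m)
    (hk : k < m) (e : Fin k → V)
    (hON : ∀ i j, ⟪e i, e j⟫ = if i = j then 1 else 0)
    (hJON : ∀ i j, ⟪e i, J (e j)⟫ = 0) :
    ∃ w : V, ‖w‖ = 1 ∧ (∀ i, ⟪e i, w⟫ = 0) ∧ (∀ i, ⟪J (e i), w⟫ = 0) := by
  obtain ⟨w, hw1, hw2⟩ := exists_unit_orthogonal (V := V) (Sum.elim e (fun i => J (e i)))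
    (by simp [hdim]; omega)
  exact ⟨w, hw1, fun i => hw2 (Sum.inl i), fun i => hw2 (Sum.inr i)⟩

include hJ in
/-- An adapted orthonormal family of full size containing a given unit vector. -/
lemma exists_adapted {m : ℕ} (hdim : Module.finrank ℝ V = 2 * m) (hm : 1 ≤ m)
    (x : V) (hx : ‖x‖ = 1) :
    ∃ e : Fin m → V, e ⟨0, hm⟩ = x ∧ (∀ i j, ⟪e i, e j⟫ = if i = j then 1 else 0) ∧
      (∀ i j, ⟪e i, J (e j)⟫ = 0) := by
  obtain ⟨n, rfl⟩ : ∃ n, m = n + 1 := ⟨m - 1, (Nat.succ_pred_eq_of_pos hm).symm⟩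
  -- build families of each size k+1 ≤ n+1 by induction
  suffices H : ∀ k, k ≤ n → ∃ e : Fin (k+1) → V, e 0 = x ∧
      (∀ i j, ⟪e i, e j⟫ = if i = j then 1 else 0) ∧
      (∀ i j, ⟪e i, J (e j)⟫ = 0) from H n le_rfl
  intro k
  induction k with
  | zero =>
    intro _
    refine ⟨fun _ => x, rfl, fun i j => ?_, fun i j => ?_⟩
    · have : i = j := Fin.ext (by omega)
      simp [this, real_inner_self_eq_norm_sq, hx]
    · exact CS.innJself hJ x
  | succ k ih =>
    intro hk
    obtain ⟨e, he0, hON, hJON⟩ := ih (Nat.le_of_succ_le hk)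
    obtain ⟨w, hw1, hw2, hw3⟩ := exists_adapted_ext (m := n+1) hdim
      (by omega) e hON hJON
    refine ⟨Fin.snoc e w, ?_, ?_, ?_⟩
    · rw [show (0 : Fin (k+2)) = Fin.castSucc 0 from rfl, Fin.snoc_castSucc, he0]
    · intro i j
      refine Fin.lastCases ?_ (fun i' => ?_) i
      · refine Fin.lastCases ?_ (fun j' => ?_) j
        · simp [Fin.snoc_last, real_inner_self_eq_norm_sq, hw1]
        · simp only [Fin.snoc_last, Fin.snoc_castSucc]
          rw [real_inner_comm]
          simp [hw2 j', (Fin.castSucc_lt_last j').ne']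
      · refine Fin.lastCases ?_ (fun j' => ?_) j
        · simp only [Fin.snoc_last, Fin.snoc_castSucc]
          simp [hw2 i', (Fin.castSucc_lt_last i').ne]
        · simp only [Fin.snoc_castSucc]
          rw [hON i' j']
          simp [Fin.castSucc_inj]
    · intro i j
      refine Fin.lastCases ?_ (fun i' => ?_) i
      · refine Fin.lastCases ?_ (fun j' => ?_) j
        · simp [Fin.snoc_last, CS.innJself hJ]
        · simp only [Fin.snoc_last, Fin.snoc_castSucc]
          rw [real_inner_comm]
          exact hw3 j'
      · refine Fin.lastCases ?_ (fun j' => ?_) j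
        · simp only [Fin.snoc_last, Fin.snoc_castSucc]
          rw [CS.innJR hJ]
          have h := hw3 i'
          rw [real_inner_comm] at h
          simp [h]
        · simp only [Fin.snoc_castSucc]
          exact hJON i' j'

include hJ in
/-- Turn an adapted family into an orthonormal basis of `V`. -/
lemma adapted_onb {m : ℕ} (hdim : Module.finrank ℝ V = 2 * m) (hm : 1 ≤ m)
    (e : Fin m → V)
    (hON : ∀ i j, ⟪e i, e j⟫ = if i = j then 1 else 0)
    (hJON : ∀ i j, ⟪e i, J (e j)⟫ = 0) :
    ∃ b : OrthonormalBasis (Fin m × Bool) ℝ V,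
      (∀ i, b (i, false) = e i) ∧ (∀ i, b (i, true) = J (e i)) := by
  classical
  set f : Fin m × Bool → V := fun p => cond p.2 (J (e p.1)) (e p.1) with hf
  have hon : Orthonormal ℝ f := by
    rw [orthonormal_iff_ite]
    rintro ⟨i, si⟩ ⟨j, sj⟩
    cases si <;> cases sj <;> simp only [hf, cond] <;>
      first
        | (rw [hON i j]; simp [Prod.ext_iff])
        | (rw [CS.innJJ hJ, hON i j]; simp [Prod.ext_iff])
        | (rw [CS.innJL hJ]; simp [hJON i j, Prod.ext_iff])
        | simp [hJON i j, Prod.ext_iff]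
  have hcard : Fintype.card (Fin m × Bool) = Module.finrank ℝ V := by
    simp [hdim]; ring
  have : Nonempty (Fin m × Bool) := ⟨⟨⟨0, hm⟩, false⟩⟩
  have hsp : ⊤ ≤ Submodule.span ℝ (Set.range f) :=
    (hon.linearIndependent.span_eq_top_of_card_eq_finrank hcard).ge
  refine ⟨OrthonormalBasis.mk hon hsp, fun i => ?_, fun i => ?_⟩ <;>
    · rw [OrthonormalBasis.coe_mk]; rfl

end Basis

/-- The Ricci tensor of an algebraic curvature tensor. -/
noncomputable def ricciT {V : Type*} [NormedAddCommGroup V] [InnerProductSpace ℝ V]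
    [FiniteDimensional ℝ V] (R : CurvTensor V) (y z : V) : ℝ :=
  ∑ i, R (stdOrthonormalBasis ℝ V i) y z (stdOrthonormalBasis ℝ V i)

/-- The scalar curvature of an algebraic curvature tensor. -/
noncomputable def scalarT {V : Type*} [NormedAddCommGroup V] [InnerProductSpace ℝ V]
    [FiniteDimensional ℝ V] (R : CurvTensor V) : ℝ :=
  ∑ i, ricciT R (stdOrthonormalBasis ℝ V i) (stdOrthonormalBasis ℝ V i)


section Lf
variable {V : Type*} [NormedAddCommGroup V] [InnerProductSpace ℝ V]

/-- Build a linear functional from a plain function. -/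
def lf (g : V → ℝ) (h1 : ∀ a b, g (a + b) = g a + g b)
    (h2 : ∀ (c : ℝ) a, g (c • a) = c * g a) : V →ₗ[ℝ] ℝ :=
  { toFun := g, map_add' := h1, map_smul' := fun c a => by simpa using h2 c a }

@[simp] lemma lf_apply (g : V → ℝ) (h1) (h2) (a : V) : lf g h1 h2 a = g a := rfl

end Lf

section Ricci
variable {V : Type*} [NormedAddCommGroup V] [InnerProductSpace ℝ V] [FiniteDimensional ℝ V]
variable (R : CurvTensor V)

lemma ric_addl (c : V) : ∀ a b, ricciT R (a + b) c = ricciT R a c + ricciT R b c := by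
  intro a b
  simp [ricciT, map_add, LinearMap.add_apply, Finset.sum_add_distrib]

lemma ric_smull (c : V) : ∀ (t : ℝ) a, ricciT R (t • a) c = t * ricciT R a c := by
  intro t a
  simp [ricciT, map_smul, LinearMap.smul_apply, Finset.mul_sum, smul_eq_mul]

lemma ric_addr (y : V) : ∀ a b, ricciT R y (a + b) = ricciT R y a + ricciT R y b := by
  intro a b
  simp [ricciT, map_add, LinearMap.add_apply, Finset.sum_add_distrib]

lemma ric_smulr (y : V) : ∀ (t : ℝ) a, ricciT R y (t • a) = t * ricciT R y a := by
  intro t a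
  simp [ricciT, map_smul, LinearMap.smul_apply, Finset.mul_sum, smul_eq_mul]

lemma ric_negr (y a : V) : ricciT R y (-a) = - ricciT R y a := by
  simp [ricciT, map_neg, LinearMap.neg_apply, Finset.sum_neg_distrib]

lemma ric_negl (y a : V) : ricciT R (-a) y = - ricciT R a y := by
  simp [ricciT, map_neg, LinearMap.neg_apply, Finset.sum_neg_distrib]

variable {J : V →ₗ[ℝ] V} (hJ : IsComplexStructure J) {T : CurvTensor V}
  (hT : IsKahlerCurv J T)

include hT in
lemma ric_symm (y z : V) : ricciT T y z = ricciT T z y := by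
  unfold ricciT
  refine Finset.sum_congr rfl fun i _ => ?_
  set e := stdOrthonormalBasis ℝ V i
  have h1 := hT.symm e y z e
  have h2 := hT.skew₁ z e e y
  have h3 := hT.skew₂ e z e y
  linarith

include hJ hT in
lemma ric_JJ (y z : V) : ricciT T (J y) (J z) = ricciT T y z := by
  set b := stdOrthonormalBasis ℝ V with hb
  set F : V →ₗ[ℝ] V →ₗ[ℝ] ℝ := LinearMap.mk₂ ℝ (fun v w => T v (J y) z w)
    (fun a a' w => by simp [map_add, LinearMap.add_apply])
    (fun c a w => by simp [map_smul, LinearMap.smul_apply])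
    (fun a w w' => by simp [map_add])
    (fun c a w => by simp [map_smul]) with hF
  have hpt : ∀ i, T (b i) (J y) (J z) (b i) = - F (b i) (J (b i)) := by
    intro i
    have h := hT.kahler (b i) (J y) (J z) (b i)
    rw [hJ.1 z] at h
    simp only [map_neg, LinearMap.neg_apply] at h
    simpa [hF, LinearMap.mk₂_apply] using h
  have htr := onb_trace_J hJ b F
  have hpt2 : ∀ i, F (J (b i)) (b i) = T (b i) y z (b i) := by
    intro i
    have := KT.J₁₂ hJ hT (b i) y z (b i)
    simpa [hF, LinearMap.mk₂_apply] using this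
  calc ricciT T (J y) (J z) = ∑ i, T (b i) (J y) (J z) (b i) := rfl
    _ = ∑ i, - F (b i) (J (b i)) := Finset.sum_congr rfl fun i _ => hpt i
    _ = - ∑ i, F (b i) (J (b i)) := by rw [Finset.sum_neg_distrib]
    _ = ∑ i, F (J (b i)) (b i) := by rw [htr]; ring
    _ = ∑ i, T (b i) y z (b i) := Finset.sum_congr rfl fun i _ => hpt2 i
    _ = ricciT T y z := rfl

include hJ hT in
lemma ric_JL (a c : V) : ricciT T (J a) c = - ricciT T a (J c) := by
  have h := ric_JJ hJ hT a (-(J c))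
  rw [map_neg, hJ.1 c, neg_neg] at h
  rw [h, ric_negr]

include hJ hT in
lemma ric_Jswap (a c : V) : ricciT T a (J c) = - ricciT T c (J a) := by
  rw [ric_symm hT a (J c), ric_JL hJ hT c a]

include hJ hT in
lemma ric_aJa (a : V) : ricciT T a (J a) = 0 := by
  have := ric_Jswap hJ hT a a
  linarith

end Ricci

/-- The Bochner curvature tensor of a Kähler-type curvature tensor
(`2 * m` is the dimension). -/
noncomputable def bochnerT {V : Type*} [NormedAddCommGroup V] [InnerProductSpace ℝ V]
    [FiniteDimensional ℝ V] (m : ℕ) (J : V →ₗ[ℝ] V) (R : CurvTensor V)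
    (x y z u : V) : ℝ :=
  R x y z u
  - (1 / (2 * ((m : ℝ) + 2))) *
      ( ⟪x, u⟫ * ricciT R y z - ⟪x, z⟫ * ricciT R y u
      + ⟪y, z⟫ * ricciT R x u - ⟪y, u⟫ * ricciT R x z
      + ⟪x, J u⟫ * ricciT R y (J z) - ⟪x, J z⟫ * ricciT R y (J u)
      + ⟪y, J z⟫ * ricciT R x (J u) - ⟪y, J u⟫ * ricciT R x (J z)
      - 2 * ⟪x, J y⟫ * ricciT R z (J u) - 2 * ⟪z, J u⟫ * ricciT R x (J y) )
  + (scalarT R / (4 * ((m : ℝ) + 1) * ((m : ℝ) + 2))) *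
      ( ⟪x, u⟫ * ⟪y, z⟫ - ⟪x, z⟫ * ⟪y, u⟫
      + ⟪x, J u⟫ * ⟪y, J z⟫ - ⟪x, J z⟫ * ⟪y, J u⟫
      - 2 * ⟪x, J y⟫ * ⟪z, J u⟫ )


section Boch
variable {V : Type*} [NormedAddCommGroup V] [InnerProductSpace ℝ V] [FiniteDimensional ℝ V]
variable (m : ℕ) (J : V →ₗ[ℝ] V) (R : CurvTensor V)

lemma boch_add1 (x x' y z u : V) : bochnerT m J R (x + x') y z u =
    bochnerT m J R x y z u + bochnerT m J R x' y z u := by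
  simp only [bochnerT, map_add, LinearMap.add_apply, inner_add_left, ric_addl]
  ring

lemma boch_smul1 (t : ℝ) (x y z u : V) : bochnerT m J R (t • x) y z u =
    t * bochnerT m J R x y z u := by
  simp only [bochnerT, map_smul, LinearMap.smul_apply, inner_smul_left, ric_smull,
    smul_eq_mul, RCLike.star_def, conj_trivial]
  ring

lemma boch_add2 (x y y' z u : V) : bochnerT m J R x (y + y') z u =
    bochnerT m J R x y z u + bochnerT m J R x y' z u := by
  simp only [bochnerT, map_add, LinearMap.add_apply, inner_add_left, inner_add_right,
    ric_addl, ric_addr]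
  ring

lemma boch_smul2 (t : ℝ) (x y z u : V) : bochnerT m J R x (t • y) z u =
    t * bochnerT m J R x y z u := by
  simp only [bochnerT, map_smul, LinearMap.smul_apply, inner_smul_left, inner_smul_right,
    ric_smull, ric_smulr, smul_eq_mul, RCLike.star_def, conj_trivial]
  ring

lemma boch_add3 (x y z z' u : V) : bochnerT m J R x y (z + z') u =
    bochnerT m J R x y z u + bochnerT m J R x y z' u := by
  simp only [bochnerT, map_add, LinearMap.add_apply, inner_add_left, inner_add_right,
    ric_addl, ric_addr]
  ring

lemma boch_smul3 (t : ℝ) (x y z u : V) : bochnerT m J R x y (t • z) u =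
    t * bochnerT m J R x y z u := by
  simp only [bochnerT, map_smul, LinearMap.smul_apply, inner_smul_left, inner_smul_right,
    ric_smull, ric_smulr, smul_eq_mul, RCLike.star_def, conj_trivial]
  ring

lemma boch_add4 (x y z u u' : V) : bochnerT m J R x y z (u + u') =
    bochnerT m J R x y z u + bochnerT m J R x y z u' := by
  simp only [bochnerT, map_add, LinearMap.add_apply, inner_add_left, inner_add_right,
    ric_addl, ric_addr]
  ring

lemma boch_smul4 (t : ℝ) (x y z u : V) : bochnerT m J R x y z (t • u) =
    t * bochnerT m J R x y z u := by
  simp only [bochnerT, map_smul, LinearMap.smul_apply, inner_smul_left, inner_smul_right,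
    ric_smull, ric_smulr, smul_eq_mul, RCLike.star_def, conj_trivial]
  ring

/-- The Bochner tensor as a bundled curvature tensor. -/
noncomputable def bochB : CurvTensor V :=
  LinearMap.mk₂ ℝ
    (fun x y => LinearMap.mk₂ ℝ (fun z u => bochnerT m J R x y z u)
      (fun z z' u => boch_add3 m J R x y z z' u)
      (fun t z u => boch_smul3 m J R t x y z u)
      (fun z u u' => boch_add4 m J R x y z u u')
      (fun t z u => boch_smul4 m J R t x y z u))
    (fun x x' y => by
      apply LinearMap.ext; intro z; apply LinearMap.ext; intro u
      simpa using boch_add1 m J R x x' y z u)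
    (fun t x y => by
      apply LinearMap.ext; intro z; apply LinearMap.ext; intro u
      simpa using boch_smul1 m J R t x y z u)
    (fun x y y' => by
      apply LinearMap.ext; intro z; apply LinearMap.ext; intro u
      simpa using boch_add2 m J R x y y' z u)
    (fun t x y => by
      apply LinearMap.ext; intro z; apply LinearMap.ext; intro u
      simpa using boch_smul2 m J R t x y z u)

@[simp] lemma bochB_apply (x y z u : V) :
    bochB m J R x y z u = bochnerT m J R x y z u := rfl

variable {J R} {m}

/-- The Bochner tensor is of Kähler type. -/
lemma bochB_kahlerlike (hJ : IsComplexStructure J) (hR : IsKahlerCurv J R) :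
    IsKahlerCurv J (bochB m J R) := by
  constructor
  · -- skew₁
    intro x y z u
    simp only [bochB_apply, bochnerT]
    rw [show ⟪y, J x⟫ = -⟪x, J y⟫ from CS.innJR hJ y x,
      show ricciT R y (J x) = - ricciT R x (J y) from ric_Jswap hJ hR y x]
    linear_combination hR.skew₁ x y z u
  · -- skew₂
    intro x y z u
    simp only [bochB_apply, bochnerT]
    rw [show ⟪u, J z⟫ = -⟪z, J u⟫ from CS.innJR hJ u z,
      show ricciT R u (J z) = - ricciT R z (J u) from ric_Jswap hJ hR u z]
    linear_combination hR.skew₂ x y z u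
  · -- symm
    intro x y z u
    simp only [bochB_apply, bochnerT]
    rw [show ⟪z, y⟫ = ⟪y, z⟫ from real_inner_comm y z,
      show ⟪z, x⟫ = ⟪x, z⟫ from real_inner_comm x z,
      show ⟪u, x⟫ = ⟪x, u⟫ from real_inner_comm x u,
      show ⟪u, y⟫ = ⟪y, u⟫ from real_inner_comm y u,
      show ricciT R u x = ricciT R x u from ric_symm hR u x,
      show ricciT R u y = ricciT R y u from ric_symm hR u y,
      show ricciT R z y = ricciT R y z from ric_symm hR z y,
      show ricciT R z x = ricciT R x z from ric_symm hR z x,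
      show ⟪z, J y⟫ = -⟪y, J z⟫ from CS.innJR hJ z y,
      show ⟪z, J x⟫ = -⟪x, J z⟫ from CS.innJR hJ z x,
      show ⟪u, J x⟫ = -⟪x, J u⟫ from CS.innJR hJ u x,
      show ⟪u, J y⟫ = -⟪y, J u⟫ from CS.innJR hJ u y,
      show ricciT R u (J x) = - ricciT R x (J u) from ric_Jswap hJ hR u x,
      show ricciT R u (J y) = - ricciT R y (J u) from ric_Jswap hJ hR u y,
      show ricciT R z (J y) = - ricciT R y (J z) from ric_Jswap hJ hR z y,
      show ricciT R z (J x) = - ricciT R x (J z) from ric_Jswap hJ hR z x]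
    linear_combination hR.symm x y z u
  · -- bianchi
    intro x y z u
    simp only [bochB_apply, bochnerT]
    rw [show ⟪y, x⟫ = ⟪x, y⟫ from real_inner_comm x y,
      show ⟪z, x⟫ = ⟪x, z⟫ from real_inner_comm x z,
      show ⟪z, y⟫ = ⟪y, z⟫ from real_inner_comm y z,
      show ricciT R y x = ricciT R x y from ric_symm hR y x,
      show ricciT R z x = ricciT R x z from ric_symm hR z x,
      show ricciT R z y = ricciT R y z from ric_symm hR z y,
      show ⟪y, J x⟫ = -⟪x, J y⟫ from CS.innJR hJ y x,
      show ⟪z, J x⟫ = -⟪x, J z⟫ from CS.innJR hJ z x,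
      show ⟪z, J y⟫ = -⟪y, J z⟫ from CS.innJR hJ z y,
      show ricciT R y (J x) = - ricciT R x (J y) from ric_Jswap hJ hR y x,
      show ricciT R z (J x) = - ricciT R x (J z) from ric_Jswap hJ hR z x,
      show ricciT R z (J y) = - ricciT R y (J z) from ric_Jswap hJ hR z y]
    linear_combination hR.bianchi x y z u
  · -- kahler
    intro x y z u
    simp only [bochB_apply, bochnerT]
    rw [hJ.1 z, hJ.1 u]
    simp only [inner_neg_right, map_neg, LinearMap.neg_apply, neg_neg,
      ric_negr, ric_negl]
    rw [show ⟪J z, u⟫ = -⟪z, J u⟫ from CS.innJL hJ z u,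
      show ricciT R (J z) u = - ricciT R z (J u) from ric_JL hJ hR z u]
    linear_combination hR.kahler x y z u

end Boch


section Boch2
variable {V : Type*} [NormedAddCommGroup V] [InnerProductSpace ℝ V] [FiniteDimensional ℝ V]
variable {m : ℕ} {J : V →ₗ[ℝ] V} {R : CurvTensor V}

local notation "bb" => stdOrthonormalBasis ℝ V

/-- The Bochner tensor is trace-free. -/
lemma boch_tracefree (hJ : IsComplexStructure J) (hR : IsKahlerCurv J R)
    (hdim : Module.finrank ℝ V = 2 * m) :
    ∀ y z : V, ∑ i, bochB m J R (bb i) y z (bb i) = 0 := by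
  intro y z
  have hunit : ∀ i, ⟪bb i, bb i⟫ = (1:ℝ) := fun i => by
    rw [real_inner_self_eq_norm_sq, (bb).orthonormal.1 i]; norm_num
  have hcard : ∀ c : ℝ, ∑ _i : Fin (Module.finrank ℝ V), c = (2*(m:ℝ)) * c := by
    intro c
    rw [Finset.sum_const, Finset.card_univ, Fintype.card_fin, hdim, nsmul_eq_mul]
    push_cast
    ring
  have hE1 : ∑ i, ⟪bb i, bb i⟫ * ricciT R y z = (2*(m:ℝ)) * ricciT R y z := by
    rw [Finset.sum_congr rfl (fun i _ => by rw [hunit i, one_mul] :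
      ∀ i ∈ Finset.univ, ⟪bb i, bb i⟫ * ricciT R y z = ricciT R y z)]
    exact hcard _
  have hE2 : ∑ i, ⟪bb i, z⟫ * ricciT R y (bb i) = ricciT R y z := by
    simpa using onb_expand bb (lf (fun w => ricciT R y w) (ric_addr R y) (ric_smulr R y)) z
  have hE3 : ∑ i, ⟪y, z⟫ * ricciT R (bb i) (bb i) = ⟪y, z⟫ * scalarT R := by
    rw [← Finset.mul_sum]; rfl
  have hE4 : ∑ i, ⟪y, bb i⟫ * ricciT R (bb i) z = ricciT R y z := by
    have h := onb_expand bb (lf (fun w => ricciT R w z) (ric_addl R z) (ric_smull R z)) y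
    simp only [lf_apply] at h
    rw [← h]
    exact Finset.sum_congr rfl fun i _ => by rw [real_inner_comm (bb i) y]
  have hE5 : ∑ i, ⟪bb i, J (bb i)⟫ * ricciT R y (J z) = 0 :=
    Finset.sum_eq_zero fun i _ => by rw [CS.innJself hJ, zero_mul]
  have hE6 : ∑ i, ⟪bb i, J z⟫ * ricciT R y (J (bb i)) = - ricciT R y z := by
    have h := onb_expand bb (lf (fun w => ricciT R y (J w))
      (fun a b => by show ricciT R y (J (a + b)) = _; rw [map_add, ric_addr])
      (fun c a => by show ricciT R y (J (c • a)) = _; rw [map_smul, ric_smulr])) (J z)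
    simp only [lf_apply] at h
    rw [h, hJ.1 z, ric_negr]
  have hE7 : ∑ i, ⟪y, J z⟫ * ricciT R (bb i) (J (bb i)) = 0 :=
    Finset.sum_eq_zero fun i _ => by rw [ric_aJa hJ hR, mul_zero]
  have hE8 : ∑ i, ⟪y, J (bb i)⟫ * ricciT R (bb i) (J z) = - ricciT R y z := by
    have h := onb_expand bb (lf (fun w => ricciT R w (J z))
      (ric_addl R (J z)) (ric_smull R (J z))) (J y)
    simp only [lf_apply] at h
    have hpt : ∀ i, ⟪y, J (bb i)⟫ * ricciT R (bb i) (J z) =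
        -(⟪bb i, J y⟫ * ricciT R (bb i) (J z)) := by
      intro i
      rw [CS.innJR hJ y (bb i)]
      ring
    rw [Finset.sum_congr rfl fun i _ => hpt i, Finset.sum_neg_distrib, h, ric_JJ hJ hR]
  have hE9 : ∑ i, 2 * ⟪bb i, J y⟫ * ricciT R z (J (bb i)) = -2 * ricciT R y z := by
    have h := onb_expand bb (lf (fun w => ricciT R z (J w))
      (fun a b => by show ricciT R z (J (a + b)) = _; rw [map_add, ric_addr])
      (fun c a => by show ricciT R z (J (c • a)) = _; rw [map_smul, ric_smulr])) (J y)
    simp only [lf_apply] at h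
    have hpt : ∀ i, 2 * ⟪bb i, J y⟫ * ricciT R z (J (bb i)) =
        2 * (⟪bb i, J y⟫ * ricciT R z (J (bb i))) := fun i => by ring
    rw [Finset.sum_congr rfl fun i _ => hpt i, ← Finset.mul_sum, h, hJ.1,
      ric_negr, ric_symm hR z y]
    ring
  have hE10 : ∑ i, 2 * ⟪z, J (bb i)⟫ * ricciT R (bb i) (J y) = -2 * ricciT R y z := by
    have h := onb_expand bb (lf (fun w => ricciT R w (J y))
      (ric_addl R (J y)) (ric_smull R (J y))) (J z)
    simp only [lf_apply] at h
    have hpt : ∀ i, 2 * ⟪z, J (bb i)⟫ * ricciT R (bb i) (J y) =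
        -2 * (⟪bb i, J z⟫ * ricciT R (bb i) (J y)) := by
      intro i
      rw [CS.innJR hJ z (bb i)]
      ring
    rw [Finset.sum_congr rfl fun i _ => hpt i, ← Finset.mul_sum, h,
      ric_JJ hJ hR z y, ric_symm hR z y]
  have hM1 : ∑ i, ⟪bb i, bb i⟫ * ⟪y, z⟫ = (2*(m:ℝ)) * ⟪y, z⟫ := by
    rw [Finset.sum_congr rfl (fun i _ => by rw [hunit i, one_mul] :
      ∀ i ∈ Finset.univ, ⟪bb i, bb i⟫ * ⟪y, z⟫ = ⟪y, z⟫)]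
    exact hcard _
  have hM2 : ∑ i, ⟪bb i, z⟫ * ⟪y, bb i⟫ = ⟪y, z⟫ := by
    have h := OrthonormalBasis.sum_inner_mul_inner bb y z
    rw [← h]
    exact Finset.sum_congr rfl fun i _ => by ring
  have hM3 : ∑ i, ⟪bb i, J (bb i)⟫ * ⟪y, J z⟫ = 0 :=
    Finset.sum_eq_zero fun i _ => by rw [CS.innJself hJ, zero_mul]
  have hM4 : ∑ i, ⟪bb i, J z⟫ * ⟪y, J (bb i)⟫ = - ⟪y, z⟫ := by
    have h := OrthonormalBasis.sum_inner_mul_inner bb (J z) (J y)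
    have hpt : ∀ i, ⟪bb i, J z⟫ * ⟪y, J (bb i)⟫ =
        -(⟪J z, bb i⟫ * ⟪bb i, J y⟫) := by
      intro i
      rw [CS.innJR hJ y (bb i), real_inner_comm (bb i) (J z)]
      ring
    rw [Finset.sum_congr rfl fun i _ => hpt i, Finset.sum_neg_distrib, h,
      CS.innJJ hJ, real_inner_comm]
  have hM5 : ∑ i, 2 * ⟪bb i, J y⟫ * ⟪z, J (bb i)⟫ = -2 * ⟪y, z⟫ := by
    have h := OrthonormalBasis.sum_inner_mul_inner bb (J y) (J z)
    have hpt : ∀ i, 2 * ⟪bb i, J y⟫ * ⟪z, J (bb i)⟫ =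
        -2 * (⟪J y, bb i⟫ * ⟪bb i, J z⟫) := by
      intro i
      rw [CS.innJR hJ z (bb i), real_inner_comm (bb i) (J y)]
      ring
    rw [Finset.sum_congr rfl fun i _ => hpt i, ← Finset.mul_sum, h, CS.innJJ hJ]
  have hS : ∑ i, R (bb i) y z (bb i) = ricciT R y z := rfl
  simp only [bochB_apply, bochnerT]
  rw [Finset.sum_add_distrib, Finset.sum_sub_distrib, ← Finset.mul_sum, ← Finset.mul_sum]
  have hbig1 : ∑ i,
      ( ⟪bb i, bb i⟫ * ricciT R y z - ⟪bb i, z⟫ * ricciT R y (bb i)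
      + ⟪y, z⟫ * ricciT R (bb i) (bb i) - ⟪y, bb i⟫ * ricciT R (bb i) z
      + ⟪bb i, J (bb i)⟫ * ricciT R y (J z) - ⟪bb i, J z⟫ * ricciT R y (J (bb i))
      + ⟪y, J z⟫ * ricciT R (bb i) (J (bb i)) - ⟪y, J (bb i)⟫ * ricciT R (bb i) (J z)
      - 2 * ⟪bb i, J y⟫ * ricciT R z (J (bb i)) - 2 * ⟪z, J (bb i)⟫ * ricciT R (bb i) (J y) ) =
      (2*(m:ℝ) + 4) * ricciT R y z + ⟪y, z⟫ * scalarT R := by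
    simp only [Finset.sum_add_distrib, Finset.sum_sub_distrib]
    rw [hE1, hE2, hE3, hE4, hE5, hE6, hE7, hE8, hE9, hE10]
    ring
  have hbig2 : ∑ i,
      ( ⟪bb i, bb i⟫ * ⟪y, z⟫ - ⟪bb i, z⟫ * ⟪y, bb i⟫
      + ⟪bb i, J (bb i)⟫ * ⟪y, J z⟫ - ⟪bb i, J z⟫ * ⟪y, J (bb i)⟫
      - 2 * ⟪bb i, J y⟫ * ⟪z, J (bb i)⟫ ) = (2*(m:ℝ) + 2) * ⟪y, z⟫ := by
    simp only [Finset.sum_add_distrib, Finset.sum_sub_distrib]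
    rw [hM1, hM2, hM3, hM4, hM5]
    ring
  rw [hS, hbig1, hbig2]
  have h1 : ((m:ℝ) + 2) ≠ 0 := by positivity
  have h2 : ((m:ℝ) + 1) ≠ 0 := by positivity
  field_simp
  ring

end Boch2

/-- `x, Jx, y, Jy, z, Jz` are pairwise orthogonal, i.e. `x, y, z` span an
antiholomorphic 3-plane. -/
def AntiholoTriple {V : Type*} [NormedAddCommGroup V] [InnerProductSpace ℝ V]
    (J : V →ₗ[ℝ] V) (x y z : V) : Prop :=
  ⟪x, y⟫ = 0 ∧ ⟪x, z⟫ = 0 ∧ ⟪y, z⟫ = 0 ∧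
  ⟪x, J x⟫ = 0 ∧ ⟪y, J y⟫ = 0 ∧ ⟪z, J z⟫ = 0 ∧
  ⟪x, J y⟫ = 0 ∧ ⟪x, J z⟫ = 0 ∧ ⟪y, J z⟫ = 0


section Vanish
variable {V : Type*} [NormedAddCommGroup V] [InnerProductSpace ℝ V] [FiniteDimensional ℝ V]

set_option maxHeartbeats 2000000 in
/-- Main abstract lemma: a trace-free Kähler-type curvature tensor satisfying the
antiholomorphic identity vanishes. -/
theorem kt_vanish {m : ℕ} (hm : 3 ≤ m) (hdim : Module.finrank ℝ V = 2 * m)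
    {J : V →ₗ[ℝ] V} (hJ : IsComplexStructure J)
    {T : CurvTensor V} (hT : IsKahlerCurv J T)
    (htf : ∀ y z : V,
      ∑ i, T (stdOrthonormalBasis ℝ V i) y z (stdOrthonormalBasis ℝ V i) = 0)
    (hA : ∀ x y z : V, AntiholoTriple J x y z → T x (J x) y z = 2 * T x y (J x) z) :
    ∀ x y z u, T x y z u = 0 := by
  -- Step 0: the hypothesis in "H" form
  have hH0 : ∀ x a b : V, AntiholoTriple J x a b →
      T x a x (J b) + T x (J a) x b = 0 := by
    intro x a b h
    have hid := KT.hId hJ hT x a b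
    have h2 := hA x a b h
    linarith
  -- Step 1: q(y) = q(y') for equinorm complex-orthogonal pairs in W_x
  have qeq : ∀ x y y' : V, ⟪x, y⟫ = 0 → ⟪x, J y⟫ = 0 → ⟪x, y'⟫ = 0 → ⟪x, J y'⟫ = 0 →
      ⟪y, y'⟫ = 0 → ⟪y, J y'⟫ = 0 → ‖y‖ = ‖y'‖ →
      T x y x (J y) = T x y' x (J y') := by
    intro x y y' hxy hxJy hxy' hxJy' hyy' hyJy' hnorm
    have f1 : ⟪y', J y⟫ = 0 := by
      have := CS.innJR hJ y' y; linarith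
    have f2 : ⟪y', y⟫ = 0 := by rw [real_inner_comm]; exact hyy'
    have hyS : ⟪y, y⟫ = ⟪y', y'⟫ := by
      rw [real_inner_self_eq_norm_sq, real_inner_self_eq_norm_sq, hnorm]
    have htrip : AntiholoTriple J x (y + y') (y - y') := by
      refine ⟨?_, ?_, ?_, CS.innJself hJ x, CS.innJself hJ _, CS.innJself hJ _, ?_, ?_, ?_⟩
      · simp only [inner_add_right]; linarith
      · simp only [inner_sub_right]; linarith
      · simp only [inner_add_left, inner_sub_right]; linarith
      · simp only [map_add, inner_add_right]; linarith
      · simp only [map_sub, inner_sub_right]; linarith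
      · simp only [map_sub, inner_add_left, inner_sub_right]
        have g1 := CS.innJself hJ y
        have g2 := CS.innJself hJ y'
        linarith
    have h := hH0 x (y + y') (y - y') htrip
    simp only [map_add, map_sub, LinearMap.add_apply, LinearMap.sub_apply] at h
    have sy1 : T x (J y') x y = T x y x (J y') := hT.symm _ _ _ _
    have sy2 : T x (J y) x y' = T x y' x (J y) := hT.symm _ _ _ _
    have sy3 : T x (J y) x y = T x y x (J y) := hT.symm _ _ _ _
    have sy4 : T x (J y') x y' = T x y' x (J y') := hT.symm _ _ _ _
    linarith
  -- Step 2: q vanishes on W_x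
  have qzero : ∀ x y : V, ⟪x, y⟫ = 0 → ⟪x, J y⟫ = 0 → T x y x (J y) = 0 := by
    intro x y hxy hxJy
    by_cases hy : y = 0
    · simp [hy]
    · obtain ⟨w, hw1, hw2⟩ := exists_unit_orthogonal (V := V) ![x, J x, y, J y]
        (by rw [Fintype.card_fin, hdim]; omega)
      have h0 : ⟪x, w⟫ = 0 := by simpa using hw2 0
      have h1 : ⟪J x, w⟫ = 0 := by simpa using hw2 1
      have h2 : ⟪y, w⟫ = 0 := by simpa using hw2 2
      have h3 : ⟪J y, w⟫ = 0 := by simpa using hw2 3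
      have hxw : ⟪x, J w⟫ = 0 := by
        have := CS.innJL hJ x w; linarith
      have hyw : ⟪y, J w⟫ = 0 := by
        have := CS.innJL hJ y w; linarith
      have hcne : ‖y‖ ≠ 0 := norm_ne_zero_iff.mpr hy
      set yh : V := ‖y‖⁻¹ • y with hyh
      have hyhn : ‖yh‖ = 1 := norm_smul_inv_norm hy
      have hxyh : ⟪x, yh⟫ = 0 := by rw [hyh, inner_smul_right, hxy]; ring
      have hxJyh : ⟪x, J yh⟫ = 0 := by
        rw [hyh, map_smul, inner_smul_right, hxJy]; ring
      have hyhw : ⟪yh, w⟫ = 0 := by rw [hyh, inner_smul_left, h2]; ring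
      have hyhJw : ⟪yh, J w⟫ = 0 := by rw [hyh, inner_smul_left, hyw]; ring
      have hxJJw : ⟪x, J (J w)⟫ = 0 := by
        rw [hJ.1 w, inner_neg_right, h0]; ring
      have hyhJJw : ⟪yh, J (J w)⟫ = 0 := by
        rw [hJ.1 w, inner_neg_right, hyhw]; ring
      have A1 : T x yh x (J yh) = T x w x (J w) :=
        qeq x yh w hxyh hxJyh h0 hxw hyhw hyhJw (by rw [hyhn, hw1])
      have A2 : T x yh x (J yh) = T x (J w) x (J (J w)) :=
        qeq x yh (J w) hxyh hxJyh hxw hxJJw hyhJw hyhJJw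
          (by rw [hyhn, CS.normJ hJ, hw1])
      have A3 : T x (J w) x (J (J w)) = - T x w x (J w) := by
        rw [hJ.1 w]
        simp only [map_neg, LinearMap.neg_apply]
        congr 1
        exact (hT.symm _ _ _ _).symm
      have hq0 : T x yh x (J yh) = 0 := by linarith
      have hrepr : y = ‖y‖ • yh := (smul_inv_smul₀ hcne y).symm
      rw [hrepr]
      simp only [map_smul, LinearMap.smul_apply, smul_eq_mul]
      rw [hq0]; ring
  -- Step 3: the bilinear H vanishes on W_x
  have C2 : ∀ x y z : V, ⟪x, y⟫ = 0 → ⟪x, J y⟫ = 0 → ⟪x, z⟫ = 0 → ⟪x, J z⟫ = 0 →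
      T x y x (J z) + T x (J y) x z = 0 := by
    intro x y z hxy hxJy hxz hxJz
    have hsum : T x (y + z) x (J (y + z)) = 0 :=
      qzero x (y + z) (by rw [inner_add_right]; linarith)
        (by rw [map_add, inner_add_right]; linarith)
    simp only [map_add, LinearMap.add_apply] at hsum
    have q1 := qzero x y hxy hxJy
    have q2 := qzero x z hxz hxJz
    have s1 : T x z x (J y) = T x (J y) x z := hT.symm _ _ _ _
    linarith
  have C4 : ∀ x y z : V, ⟪x, y⟫ = 0 → ⟪x, J y⟫ = 0 → ⟪x, z⟫ = 0 → ⟪x, J z⟫ = 0 →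
      T x (J y) x (J z) = T x y x z := by
    intro x y z hxy hxJy hxz hxJz
    have hxJJy : ⟪x, J (J y)⟫ = 0 := by rw [hJ.1 y, inner_neg_right, hxy]; ring
    have h := C2 x (J y) z hxJy hxJJy hxz hxJz
    rw [hJ.1 y] at h
    simp only [map_neg, LinearMap.neg_apply] at h
    linarith
  -- Step 4: K2
  have K2 : ∀ a b : V, ⟪a, b⟫ = 0 → ⟪a, J b⟫ = 0 → T a (J a) b (J b) = 2 * T a b a b := by
    intro a b h1 h2
    have hk := KT.K1 hJ hT a b
    have hc := C4 a b b h1 h2 h1 h2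
    linarith
  -- Step 5: F2 : μ(x) + μ(y) = 8 G(x,y) for unit complex-orthogonal pairs
  have F2 : ∀ x y : V, ‖x‖ = 1 → ‖y‖ = 1 → ⟪x, y⟫ = 0 → ⟪x, J y⟫ = 0 →
      T x (J x) x (J x) + T y (J y) y (J y) = 8 * T x y x y := by
    intro x y hx hy hxy hxJy
    have hyJx : ⟪y, J x⟫ = 0 := by have := CS.innJR hJ y x; linarith
    have huv1 : ⟪x + y, x - y⟫ = 0 := by
      simp only [inner_add_left, inner_sub_right]
      have e1 : ⟪x, x⟫ = 1 := by
        rw [real_inner_self_eq_norm_sq, hx]; norm_num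
      have e2 : ⟪y, y⟫ = 1 := by
        rw [real_inner_self_eq_norm_sq, hy]; norm_num
      have e3 : ⟪y, x⟫ = 0 := by rw [real_inner_comm]; exact hxy
      linarith
    have huv2 : ⟪x + y, J (x - y)⟫ = 0 := by
      simp only [map_sub, inner_add_left, inner_sub_right]
      have g1 := CS.innJself hJ x
      have g2 := CS.innJself hJ y
      linarith
    have hK2uv := K2 (x + y) (x - y) huv1 huv2
    simp only [map_add, map_sub, LinearMap.add_apply, LinearMap.sub_apply] at hK2uv
    -- identities
    have e1 : T y (J x) y (J x) = T x (J y) x (J y) := KT.L5 hJ hT x y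
    have e2 : T x (J y) x (J y) = T x y x y := C4 x y y hxy hxJy hxy hxJy
    have e3 : T x (J y) y (J x) = T x (J x) y (J y) - T x y x y := KT.P1 hJ hT x y
    have e4 : T x (J x) y (J y) = 2 * T x y x y := K2 x y hxy hxJy
    have s1 : T x (J y) x (J x) = T x (J x) x (J y) := hT.symm _ _ _ _
    have s2 : T y (J x) x (J x) = T x (J x) y (J x) := hT.symm _ _ _ _
    have s3 : T y (J x) y (J y) = T y (J y) y (J x) := hT.symm _ _ _ _
    have s4 : T x (J y) y (J y) = T y (J y) x (J y) := hT.symm _ _ _ _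
    have s5 : T y (J x) x (J y) = T x (J y) y (J x) := hT.symm _ _ _ _
    have s6 : T y (J y) x (J x) = T x (J x) y (J y) := hT.symm _ _ _ _
    -- zeros on the RHS
    have z1 : T x x x x = 0 := KT.zero₁₂ hT x x x
    have z2 : T x x x y = 0 := KT.zero₁₂ hT x x y
    have z3 : T x x y x = 0 := KT.zero₁₂ hT x y x
    have z4 : T x x y y = 0 := KT.zero₁₂ hT x y y
    have z5 : T y y x x = 0 := KT.zero₁₂ hT y x x
    have z6 : T y y x y = 0 := KT.zero₁₂ hT y x y
    have z7 : T y y y x = 0 := KT.zero₁₂ hT y y x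
    have z8 : T y y y y = 0 := KT.zero₁₂ hT y y y
    have z9 : T x y x x = 0 := KT.zero₃₄ hT x y x
    have z10 : T x y y y = 0 := KT.zero₃₄ hT x y y
    have z11 : T y x x x = 0 := KT.zero₃₄ hT y x x
    have z12 : T y x y y = 0 := KT.zero₃₄ hT y x y
    have k1 : T x y y x = - T x y x y := hT.skew₂ x y y x
    have k4 : T y x x y = - T x y x y := by
      have := hT.skew₁ y x x y; linarith
    have k5 : T y x y x = - T x y y x := hT.skew₁ y x y x
    linarith
  -- Step 6: μ vanishes on unit vectors
  have mu_unit : ∀ x : V, ‖x‖ = 1 → T x (J x) x (J x) = 0 := by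
    intro x hx
    have hm1 : 1 ≤ m := by omega
    obtain ⟨e, he0, hON, hJON⟩ := exists_adapted hJ hdim hm1 x hx
    obtain ⟨b, hb1, hb2⟩ := adapted_onb hJ hdim hm1 e hON hJON
    have heunit : ∀ i, ‖e i‖ = 1 := by
      intro i
      have h := hON i i
      rw [if_pos rfl, real_inner_self_eq_norm_sq] at h
      nlinarith [norm_nonneg (e i)]
    set μ : Fin m → ℝ := fun i => T (e i) (J (e i)) (e i) (J (e i)) with hμ
    set s : ℝ := ∑ j, μ j with hs
    -- trace identity for each i
    have htrace : ∀ i : Fin m, ((m : ℝ) + 2) * μ i + s = 0 := by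
      intro i
      -- the basic trace
      set F : V →ₗ[ℝ] V →ₗ[ℝ] ℝ := LinearMap.mk₂ ℝ (fun v w => T v (e i) (e i) w)
        (fun a a' w => by simp [map_add, LinearMap.add_apply])
        (fun c a w => by simp [map_smul, LinearMap.smul_apply])
        (fun a w w' => by simp [map_add])
        (fun c a w => by simp [map_smul]) with hF
      have htr0 : ∑ p, F (b p) (b p) = 0 := by
        rw [onb_trace_indep b (stdOrthonormalBasis ℝ V) F]
        exact htf (e i) (e i)
      have htr1 : ∑ p, T (e i) (b p) (e i) (b p) = 0 := by
        have : ∀ p, T (e i) (b p) (e i) (b p) = - F (b p) (b p) := by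
          intro p
          have := hT.skew₁ (e i) (b p) (e i) (b p)
          simpa [hF, LinearMap.mk₂_apply] using this
        rw [Finset.sum_congr rfl fun p _ => this p, Finset.sum_neg_distrib, htr0, neg_zero]
      rw [Fintype.sum_prod_type] at htr1
      have hbool : ∀ j : Fin m, ∑ s : Bool, T (e i) (b (j, s)) (e i) (b (j, s)) =
          T (e i) (e j) (e i) (e j) + T (e i) (J (e j)) (e i) (J (e j)) := by
        intro j
        rw [Fintype.sum_bool, hb1 j, hb2 j]
        ring
      rw [Finset.sum_congr rfl fun j _ => hbool j] at htr1
      -- split diagonal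
      have hdiag : ∀ j : Fin m, j ≠ i →
          T (e i) (e j) (e i) (e j) + T (e i) (J (e j)) (e i) (J (e j)) =
          2 * T (e i) (e j) (e i) (e j) := by
        intro j hj
        have hij : ⟪e i, e j⟫ = 0 := by
          rw [hON i j, if_neg (fun h => hj h.symm)]
        have hiJj : ⟪e i, J (e j)⟫ = 0 := hJON i j
        have := C4 (e i) (e j) (e j) hij hiJj hij hiJj
        linarith
      have hdiag_i : T (e i) (e i) (e i) (e i) + T (e i) (J (e i)) (e i) (J (e i)) = μ i := by
        rw [KT.zero₁₂ hT (e i) (e i) (e i)]; simp [hμ]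
      rw [← Finset.add_sum_erase _ _ (Finset.mem_univ i), hdiag_i] at htr1
      have herase : ∑ j ∈ Finset.univ.erase i,
          (T (e i) (e j) (e i) (e j) + T (e i) (J (e j)) (e i) (J (e j))) =
          ∑ j ∈ Finset.univ.erase i, (2 * T (e i) (e j) (e i) (e j)) := by
        refine Finset.sum_congr rfl fun j hj => ?_
        exact hdiag j (Finset.ne_of_mem_erase hj)
      rw [herase] at htr1
      -- use F2 on off-diagonal terms
      have hoff : ∀ j ∈ Finset.univ.erase i,
          2 * T (e i) (e j) (e i) (e j) = (μ i + μ j) / 4 := by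
        intro j hj
        have hji : j ≠ i := Finset.ne_of_mem_erase hj
        have hij : ⟪e i, e j⟫ = 0 := by
          rw [hON i j, if_neg (fun h => hji h.symm)]
        have hiJj : ⟪e i, J (e j)⟫ = 0 := hJON i j
        have := F2 (e i) (e j) (heunit i) (heunit j) hij hiJj
        simp only [hμ]
        linarith
      rw [Finset.sum_congr rfl hoff] at htr1
      have hterm : ∑ j ∈ Finset.univ.erase i, (μ i + μ j) =
          ((m : ℝ) - 1) * μ i + (s - μ i) := by
        rw [Finset.sum_add_distrib, Finset.sum_const, Finset.card_erase_of_mem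
          (Finset.mem_univ i), Finset.card_univ, Fintype.card_fin]
        have herase2 : ∑ j ∈ Finset.univ.erase i, μ j = s - μ i := by
          rw [hs, ← Finset.add_sum_erase _ _ (Finset.mem_univ i)]
          ring
        rw [herase2]
        have hcast : ((m - 1 : ℕ) : ℝ) = (m : ℝ) - 1 := by
          have h1 : (1:ℕ) ≤ m := hm1
          push_cast [h1]
          ring
        rw [nsmul_eq_mul, hcast]
      rw [← Finset.sum_div, hterm] at htr1
      linarith
    -- sum the equations
    have hsumall : ((m : ℝ) + 2) * s + (m : ℝ) * s = 0 := by
      have := Finset.sum_congr rfl (fun i (_ : i ∈ Finset.univ) => htrace i)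
      rw [Finset.sum_add_distrib, Finset.sum_const, ← Finset.mul_sum, Finset.card_univ,
        Fintype.card_fin, Finset.sum_const_zero] at this
      rw [nsmul_eq_mul] at this
      linarith [this]
    have hszero : s = 0 := by nlinarith [hsumall]
    have hprod : ((m:ℝ) + 2) * μ ⟨0, hm1⟩ = 0 := by
      have := htrace ⟨0, hm1⟩
      rw [hszero] at this
      linarith
    have hne : ((m:ℝ) + 2) ≠ 0 := by positivity
    have hmu0 : μ ⟨0, hm1⟩ = 0 := (mul_eq_zero.mp hprod).resolve_left hne
    rw [hμ] at hmu0
    simp only at hmu0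
    rw [he0] at hmu0
    exact hmu0
  -- Step 7: μ ≡ 0
  have muzero : ∀ x : V, T x (J x) x (J x) = 0 := by
    intro x
    by_cases hx : x = 0
    · simp [hx]
    · have hcne : ‖x‖ ≠ 0 := norm_ne_zero_iff.mpr hx
      have h := mu_unit (‖x‖⁻¹ • x) (norm_smul_inv_norm hx)
      simp only [map_smul, LinearMap.smul_apply, smul_eq_mul] at h
      have h4 : (‖x‖⁻¹)^4 * T x (J x) x (J x) = 0 := by
        rw [← h]; ring
      have : (‖x‖⁻¹)^4 ≠ 0 := by positivity
      exact (mul_eq_zero.mp h4).resolve_left this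
  -- Step 8: second-order polarization relation
  have hc2 : ∀ x y : V,
      T x (J x) y (J y) + T x (J y) x (J y) + T x (J y) y (J x) = 0 := by
    intro x y
    have h1 := muzero (x + y)
    have h2 := muzero (x + (-1:ℝ) • y)
    simp only [map_add, map_sub, LinearMap.add_apply, LinearMap.sub_apply] at h1
    simp only [map_add, map_smul, LinearMap.add_apply, LinearMap.smul_apply, smul_eq_mul] at h2
    have m1 := muzero x
    have m2 := muzero y
    have s1 : T y (J y) x (J x) = T x (J x) y (J y) := hT.symm _ _ _ _
    have s2 : T y (J x) y (J x) = T x (J y) x (J y) := KT.L5 hJ hT x y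
    have s3 : T y (J x) x (J y) = T x (J y) y (J x) := hT.symm _ _ _ _
    have s4 : T x (J y) x (J x) = T x (J x) x (J y) := hT.symm _ _ _ _
    have s5 : T y (J x) x (J x) = T x (J x) y (J x) := hT.symm _ _ _ _
    have s6 : T y (J x) y (J y) = T y (J y) y (J x) := hT.symm _ _ _ _
    have s7 : T x (J y) y (J y) = T y (J y) x (J y) := hT.symm _ _ _ _
    have s8 : T y (J y) x (J y) = T x (J y) y (J y) := hT.symm _ _ _ _
    linarith
  -- Step 9: sectional-type curvature vanishes
  have Gzero : ∀ x y : V, T x y x y = 0 := by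
    intro x y
    have h1 := hc2 x y
    have h2 := hc2 x (J y)
    rw [hJ.1 y] at h2
    simp only [map_neg, LinearMap.neg_apply, neg_neg] at h2
    have hk := KT.K1 hJ hT x y
    have hp := KT.P1 hJ hT x y
    have hp2 := KT.P1 hJ hT x (J y)
    rw [hJ.1 y] at hp2
    simp only [map_neg, LinearMap.neg_apply, neg_neg] at hp2
    have sk : T x (J x) (J y) y = - T x (J x) y (J y) := by
      have := hT.skew₂ x (J x) (J y) y; linarith
    linarith
  -- Step 10: conclude
  have step1 : ∀ x y z : V, T x y z y = 0 := by
    intro x y z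
    have h := Gzero (x + z) y
    simp only [map_add, LinearMap.add_apply] at h
    have g1 := Gzero x y
    have g2 := Gzero z y
    have s1 : T z y x y = T x y z y := hT.symm _ _ _ _
    linarith
  have step2 : ∀ x y z u : V, T x y z u + T x u z y = 0 := by
    intro x y z u
    have h := step1 x (y + u) z
    simp only [map_add, LinearMap.add_apply] at h
    have g1 := step1 x y z
    have g2 := step1 x u z
    linarith
  have step3 : ∀ x y z u : V, 2 * T x y z u = T x z y u := by
    intro x y z u
    have hb := hT.bianchi x y z u
    have c1 : T y z x u = - T x z y u := by
      have h1 := step2 y z x u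
      have h2 : T y u x z = T x z y u := hT.symm _ _ _ _
      linarith
    have c2 : T z x y u = T x y z u := by
      have h1 := step2 z x y u
      have h2 : T z u y x = T y x z u := hT.symm _ _ _ _
      have h3 : T y x z u = - T x y z u := by
        have := hT.skew₁ y x z u; linarith
      linarith
    linarith
  intro x y z u
  have h1 := step3 x y z u
  have h2 := step3 x z y u
  linarith

end Vanish


section Final
variable {V : Type*} [NormedAddCommGroup V] [InnerProductSpace ℝ V] [FiniteDimensional ℝ V]
variable {m : ℕ} {J : V →ₗ[ℝ] V} {R : CurvTensor V}

/-- On a unit antiholomorphic triple, the Bochner combination agrees with the curvature one. -/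
lemma boch_combo (hJ : IsComplexStructure J) (hR : IsKahlerCurv J R) {x y z : V}
    (hx : ‖x‖ = 1) (h : AntiholoTriple J x y z) :
    bochnerT m J R x (J x) y z - 2 * bochnerT m J R x y (J x) z =
      R x (J x) y z - 2 * R x y (J x) z := by
  obtain ⟨hxy, hxz, hyz, hxJx, hyJy, hzJz, hxJy, hxJz, hyJz⟩ := h
  have hxx : ⟪x, x⟫ = (1:ℝ) := by
    rw [real_inner_self_eq_norm_sq, hx]; norm_num
  have hJxy : ⟪J x, y⟫ = 0 := by
    rw [CS.innJL hJ, hxJy, neg_zero]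
  have hJxz : ⟪J x, z⟫ = 0 := by
    rw [CS.innJL hJ, hxJz, neg_zero]
  have hJxJy : ⟪J x, J y⟫ = 0 := by rw [CS.innJJ hJ, hxy]
  have hJxJz : ⟪J x, J z⟫ = 0 := by rw [CS.innJJ hJ, hxz]
  have hyx : ⟪y, x⟫ = 0 := by rw [real_inner_comm, hxy]
  have hyJx : ⟪y, J x⟫ = 0 := by
    rw [CS.innJR hJ, hxJy, neg_zero]
  have hSxJx : ricciT R x (J x) = 0 := ric_aJa hJ hR x
  simp only [bochnerT]
  rw [hJ.1 x]
  simp only [inner_neg_right, map_neg, LinearMap.neg_apply, ric_negr, ric_negl]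
  rw [hxy, hxz, hyz, hxJx, hxJy, hxJz, hyJz, hJxy, hJxz, hJxJy, hJxJz, hyx, hyJx,
    hxx, hSxJx]
  ring

end Final


/-- A `J`-adapted orthonormal family `{e i, J (e i)}`. -/
def IsAdaptedBasis {V : Type*} [NormedAddCommGroup V] [InnerProductSpace ℝ V]
    (J : V →ₗ[ℝ] V) {m : ℕ} (e : Fin m → V) : Prop :=
  (∀ i j, ⟪e i, e j⟫ = if i = j then 1 else 0) ∧ ∀ i j, ⟪e i, J (e j)⟫ = 0


/-- A Kähler manifold of real dimension `2m ≥ 6` has vanishing Bochner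
tensor iff `R(x,Jx,y,z) = 2 R(x,y,Jx,z)` for all unit vectors spanning an
antiholomorphic 3-plane, at every point. -/
theorem bochner_vanishes_iff_antiholo_identity
    {V : Type*} [NormedAddCommGroup V] [InnerProductSpace ℝ V]
    [FiniteDimensional ℝ V] {P : Type*}
    (m : ℕ) (hm : 3 ≤ m) (hdim : Module.finrank ℝ V = 2 * m)
    (J : V →ₗ[ℝ] V) (hJ : IsComplexStructure J)
    (R : P → CurvTensor V) (hR : ∀ p, IsKahlerCurv J (R p)) :
    (∀ p x y z u, bochnerT m J (R p) x y z u = 0) ↔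
      (∀ p (x y z : V), ‖x‖ = 1 → ‖y‖ = 1 → ‖z‖ = 1 → AntiholoTriple J x y z →
        R p x (J x) y z = 2 * R p x y (J x) z) := by
  constructor
  · intro hB p x y z hx _hy _hz htrip
    have hc := boch_combo (m := m) hJ (hR p) hx htrip
    rw [hB p x (J x) y z, hB p x y (J x) z] at hc
    linarith
  · intro hid p x y z u
    have hBK := bochB_kahlerlike (m := m) hJ (hR p)
    have hBtf := boch_tracefree (m := m) hJ (hR p) hdim
    have hA : ∀ a b c : V, AntiholoTriple J a b c →
        bochB m J (R p) a (J a) b c = 2 * bochB m J (R p) a b (J a) c := by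
      intro a b c h
      by_cases ha : a = 0
      · rw [ha]; simp only [map_zero, LinearMap.zero_apply, mul_zero]
      by_cases hb : b = 0
      · rw [hb]; simp only [map_zero, LinearMap.zero_apply, mul_zero]
      by_cases hc0 : c = 0
      · rw [hc0]; simp only [map_zero, LinearMap.zero_apply, mul_zero]
      obtain ⟨t1, t2, t3, t4, t5, t6, t7, t8, t9⟩ := h
      have hna : ‖(‖a‖⁻¹ • a : V)‖ = 1 := norm_smul_inv_norm ha
      have hnb : ‖(‖b‖⁻¹ • b : V)‖ = 1 := norm_smul_inv_norm hb
      have hnc : ‖(‖c‖⁻¹ • c : V)‖ = 1 := norm_smul_inv_norm hc0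
      have htrip' : AntiholoTriple J (‖a‖⁻¹ • a) (‖b‖⁻¹ • b) (‖c‖⁻¹ • c) := by
        refine ⟨?_, ?_, ?_, ?_, ?_, ?_, ?_, ?_, ?_⟩ <;>
          simp only [map_smul, real_inner_smul_left, real_inner_smul_right,
            t1, t2, t3, t4, t5, t6, t7, t8, t9, mul_zero]
      have hunit := hid p _ _ _ hna hnb hnc htrip'
      have hcombo := boch_combo (m := m) hJ (hR p) hna htrip'
      have hkey : bochB m J (R p) (‖a‖⁻¹ • a) (J (‖a‖⁻¹ • a)) (‖b‖⁻¹ • b) (‖c‖⁻¹ • c) =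
          2 * bochB m J (R p) (‖a‖⁻¹ • a) (‖b‖⁻¹ • b) (J (‖a‖⁻¹ • a)) (‖c‖⁻¹ • c) := by
        simp only [bochB_apply]
        linarith
      have hra : (‖a‖ : ℝ) • (‖a‖⁻¹ • a) = a := smul_inv_smul₀ (norm_ne_zero_iff.mpr ha) a
      have hrb : (‖b‖ : ℝ) • (‖b‖⁻¹ • b) = b := smul_inv_smul₀ (norm_ne_zero_iff.mpr hb) b
      have hrc : (‖c‖ : ℝ) • (‖c‖⁻¹ • c) = c := smul_inv_smul₀ (norm_ne_zero_iff.mpr hc0) c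
      have e1 : bochB m J (R p) (‖a‖ • (‖a‖⁻¹ • a)) (J (‖a‖ • (‖a‖⁻¹ • a)))
          (‖b‖ • (‖b‖⁻¹ • b)) (‖c‖ • (‖c‖⁻¹ • c)) =
          (‖a‖^2 * (‖b‖ * ‖c‖)) *
            bochB m J (R p) (‖a‖⁻¹ • a) (J (‖a‖⁻¹ • a)) (‖b‖⁻¹ • b) (‖c‖⁻¹ • c) := by
        simp only [map_smul, LinearMap.smul_apply, smul_eq_mul]
        ring
      have e2 : bochB m J (R p) (‖a‖ • (‖a‖⁻¹ • a)) (‖b‖ • (‖b‖⁻¹ • b))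
          (J (‖a‖ • (‖a‖⁻¹ • a))) (‖c‖ • (‖c‖⁻¹ • c)) =
          (‖a‖^2 * (‖b‖ * ‖c‖)) *
            bochB m J (R p) (‖a‖⁻¹ • a) (‖b‖⁻¹ • b) (J (‖a‖⁻¹ • a)) (‖c‖⁻¹ • c) := by
        simp only [map_smul, LinearMap.smul_apply, smul_eq_mul]
        ring
      rw [hra, hrb, hrc] at e1 e2
      rw [e1, e2, hkey]
      ring
    exact kt_vanish hm hdim hJ hBK hBtf hA x y z u
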